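/- arXiv:1901.06898 — 3 statements merged into one kernel-verified Lean document; each statement's English description precedes it below -/
import Mathlib

section
/- Let 0 < α < 1. Suppose f : ℝⁿ → ℝ satisfies the growth bound |f(x)| ≤ M(1+|x|)^α for all x, and the Zygmund second-difference bound |f(x+z) + f(x-z) - 2f(x)| ≤ N|z|^α for all x, z ∈ ℝⁿ. Then there is a constant C depending only on α, M, N (not on f otherwise) such that |f(x+z) - f(x)| ≤ C|z|^α for all x, z ∈ ℝⁿ. -/
theorem stmt_1 (n : ℕ) (α M N : ℝ) (hα0 : 0 < α) (hα1 : α < 1) (hM : 0 < M) (hN : 0 < N)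
    (f : EuclideanSpace ℝ (Fin n) → ℝ)
    (hgrowth : ∀ x, |f x| ≤ M * (1 + ‖x‖) ^ α)
    (hzyg : ∀ x z, |f (x + z) + f (x - z) - 2 * f x| ≤ N * ‖z‖ ^ α) :
    ∃ C > 0, ∀ x z, |f (x + z) - f x| ≤ C * ‖z‖ ^ α := by
  set c : ℝ := (2 : ℝ) ^ (α - 1) with hc
  have hc0 : 0 < c := Real.rpow_pos_of_pos (by norm_num) _
  have hc1 : c < 1 := Real.rpow_lt_one_of_one_lt_of_neg (by norm_num) (by linarith)
  have hceq : c = (2 : ℝ) ^ α / 2 := by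
    rw [hc, Real.rpow_sub (by norm_num), Real.rpow_one]
  -- halving step
  have step : ∀ x z : EuclideanSpace ℝ (Fin n),
      |f (x + z) - f x| ≤ |f (x + (2:ℝ) • z) - f x| / 2 + N / 2 * ‖z‖ ^ α := by
    intro x z
    have hz := hzyg (x + z) z
    have e1 : x + z + z = x + (2:ℝ) • z := by
      rw [two_smul]; abel
    have e2 : x + z - z = x := by abel
    rw [e1, e2] at hz
    have key : f (x + z) - f x =
        (f (x + (2:ℝ) • z) - f x) / 2 -
        (f (x + (2:ℝ) • z) + f x - 2 * f (x + z)) / 2 := by ring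
    rw [key]
    have h1 : |(f (x + (2:ℝ) • z) - f x) / 2 -
        (f (x + (2:ℝ) • z) + f x - 2 * f (x + z)) / 2|
        ≤ |(f (x + (2:ℝ) • z) - f x) / 2| +
          |(f (x + (2:ℝ) • z) + f x - 2 * f (x + z)) / 2| := abs_sub _ _
    rw [abs_div, abs_div] at h1
    have h2 : |(2:ℝ)| = 2 := by norm_num
    rw [h2] at h1
    linarith [hz]
  -- iterated step
  have iter : ∀ m : ℕ, ∀ x z : EuclideanSpace ℝ (Fin n),
      |f (x + z) - f x| ≤ |f (x + ((2:ℝ) ^ m) • z) - f x| / 2 ^ m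
        + N / 2 * ‖z‖ ^ α * ∑ k ∈ Finset.range m, c ^ k := by
    intro m
    induction m with
    | zero => intro x z; simp
    | succ m ih =>
      intro x z
      have h1 := step x z
      have h2 := ih x ((2:ℝ) • z)
      have e : x + ((2:ℝ) ^ m) • ((2:ℝ) • z) = x + ((2:ℝ) ^ (m + 1)) • z := by
        rw [smul_smul]; ring_nf
      rw [e] at h2
      have hn : ‖(2:ℝ) • z‖ ^ α = (2:ℝ) ^ α * ‖z‖ ^ α := by
        rw [norm_smul, Real.norm_eq_abs, abs_of_nonneg (by norm_num : (0:ℝ) ≤ 2),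
          Real.mul_rpow (by norm_num) (norm_nonneg _)]
      rw [hn] at h2
      have hgeom : ∑ k ∈ Finset.range (m + 1), c ^ k
          = c * ∑ k ∈ Finset.range m, c ^ k + 1 := geom_sum_succ
      have hz2 : (0:ℝ) ≤ ‖z‖ ^ α := Real.rpow_nonneg (norm_nonneg _) _
      have hsum : (0:ℝ) ≤ ∑ k ∈ Finset.range m, c ^ k :=
        Finset.sum_nonneg fun k _ => pow_nonneg hc0.le k
      have h2' : |f (x + ((2:ℝ) ^ (m + 1)) • z) - f x| / 2 ^ m / 2
          + N / 2 * ((2:ℝ) ^ α * ‖z‖ ^ α) * (∑ k ∈ Finset.range m, c ^ k) / 2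
          = |f (x + ((2:ℝ) ^ (m + 1)) • z) - f x| / 2 ^ (m + 1)
          + N / 2 * ‖z‖ ^ α * (c * ∑ k ∈ Finset.range m, c ^ k) := by
        rw [hceq]; ring
      rw [hgeom]
      have habs : (0:ℝ) ≤ |f (x + ((2:ℝ) ^ (m + 1)) • z) - f x| := abs_nonneg _
      nlinarith [h1, h2, habs, hz2, hsum, hN.le]
  -- sum bound
  have hsumle : ∀ m : ℕ, ∑ k ∈ Finset.range m, c ^ k ≤ 1 / (1 - c) := by
    intro m
    have h1c : (0:ℝ) < 1 - c := by linarith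
    have e : (c ^ m - 1) / (c - 1) = (1 - c ^ m) / (1 - c) := by
      rw [← neg_div_neg_eq]; ring_nf
    rw [geom_sum_eq hc1.ne, e, div_le_div_iff₀ h1c h1c]
    nlinarith [pow_nonneg hc0.le m]
  have h1c : (0:ℝ) < 1 - c := by linarith
  refine ⟨N / 2 / (1 - c) + 1, by positivity, fun x z => ?_⟩
  have hz2 : (0:ℝ) ≤ ‖z‖ ^ α := Real.rpow_nonneg (norm_nonneg _) _
  set K : ℝ := M * (1 + ‖x‖ + ‖z‖) ^ α with hK
  set L : ℝ := M * (1 + ‖x‖) ^ α with hL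
  set B : ℝ := N / 2 / (1 - c) * ‖z‖ ^ α with hB
  -- remainder bound
  have hrem : ∀ m : ℕ, |f (x + ((2:ℝ) ^ m) • z) - f x| / 2 ^ m
      ≤ K * c ^ m + L * (1/2 : ℝ) ^ m := by
    intro m
    have hnorm : ‖x + ((2:ℝ) ^ m) • z‖ ≤ ‖x‖ + 2 ^ m * ‖z‖ := by
      calc ‖x + ((2:ℝ) ^ m) • z‖ ≤ ‖x‖ + ‖((2:ℝ) ^ m) • z‖ := norm_add_le _ _
        _ = ‖x‖ + 2 ^ m * ‖z‖ := by
            rw [norm_smul, Real.norm_eq_abs, abs_of_nonneg (by positivity)]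
    have h2m1 : (1:ℝ) ≤ 2 ^ m := one_le_pow₀ (by norm_num)
    have hle : 1 + ‖x + ((2:ℝ) ^ m) • z‖ ≤ 2 ^ m * (1 + ‖x‖ + ‖z‖) := by
      have := norm_nonneg x
      nlinarith [norm_nonneg z]
    have h1 : |f (x + ((2:ℝ) ^ m) • z)| ≤ M * (2 ^ m * (1 + ‖x‖ + ‖z‖)) ^ α := by
      calc |f (x + ((2:ℝ) ^ m) • z)| ≤ M * (1 + ‖x + ((2:ℝ) ^ m) • z‖) ^ α := hgrowth _
        _ ≤ M * (2 ^ m * (1 + ‖x‖ + ‖z‖)) ^ α := by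
            apply mul_le_mul_of_nonneg_left _ hM.le
            exact Real.rpow_le_rpow (by positivity) hle hα0.le
    have hmp : ((2:ℝ) ^ m * (1 + ‖x‖ + ‖z‖)) ^ α
        = ((2:ℝ) ^ m) ^ α * (1 + ‖x‖ + ‖z‖) ^ α :=
      Real.mul_rpow (by positivity) (by positivity)
    have hpw : ((2:ℝ) ^ m) ^ α / 2 ^ m = c ^ m := by
      rw [← Real.rpow_natCast (2:ℝ) m, ← Real.rpow_natCast c m, hc,
        ← Real.rpow_mul (by norm_num), ← Real.rpow_mul (by norm_num),
        ← Real.rpow_sub (by norm_num)]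
      congr 1; ring
    have h2 : |f x| ≤ L := hgrowth x
    have habs : |f (x + ((2:ℝ) ^ m) • z) - f x|
        ≤ |f (x + ((2:ℝ) ^ m) • z)| + |f x| := abs_sub _ _
    have h2mpos : (0:ℝ) < 2 ^ m := by positivity
    rw [div_le_iff₀ h2mpos]
    have hKc : K * c ^ m * 2 ^ m = M * (((2:ℝ) ^ m) ^ α * (1 + ‖x‖ + ‖z‖) ^ α) := by
      rw [← hpw]; field_simp [hK]; ring
    have hL2 : L * (1/2:ℝ) ^ m * 2 ^ m = L := by
      rw [div_pow, one_pow]; field_simp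
    rw [add_mul, hKc, hL2, ← hmp]
    linarith
  -- pass to the limit
  have hbound : ∀ m : ℕ, |f (x + z) - f x| ≤ K * c ^ m + L * (1/2:ℝ) ^ m + B := by
    intro m
    have h1 := iter m x z
    have h2 := hrem m
    have h3 := hsumle m
    have hNz : (0:ℝ) ≤ N / 2 * ‖z‖ ^ α := by positivity
    have h4 : N / 2 * ‖z‖ ^ α * ∑ k ∈ Finset.range m, c ^ k ≤ B := by
      rw [hB]
      calc N / 2 * ‖z‖ ^ α * ∑ k ∈ Finset.range m, c ^ k
          ≤ N / 2 * ‖z‖ ^ α * (1 / (1 - c)) := by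
            exact mul_le_mul_of_nonneg_left h3 hNz
        _ = N / 2 / (1 - c) * ‖z‖ ^ α := by ring
    linarith
  have htend : Filter.Tendsto (fun m : ℕ => K * c ^ m + L * (1/2:ℝ) ^ m + B)
      Filter.atTop (nhds B) := by
    have t1 : Filter.Tendsto (fun m : ℕ => K * c ^ m) Filter.atTop (nhds 0) := by
      have := tendsto_pow_atTop_nhds_zero_of_lt_one hc0.le hc1
      simpa using this.const_mul K
    have t2 : Filter.Tendsto (fun m : ℕ => L * (1/2:ℝ) ^ m) Filter.atTop (nhds 0) := by
      have := tendsto_pow_atTop_nhds_zero_of_lt_one (by norm_num : (0:ℝ) ≤ 1/2)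
        (by norm_num : (1/2:ℝ) < 1)
      simpa using this.const_mul L
    have := (t1.add t2).add_const B
    simpa using this
  have hfinal : |f (x + z) - f x| ≤ B := ge_of_tendsto' htend hbound
  have : B ≤ (N / 2 / (1 - c) + 1) * ‖z‖ ^ α := by
    rw [hB]; nlinarith
  linarith
end

section
/- Let 0 < α < 2 and let f : ℝⁿ → ℝ be bounded and measurable with Zygmund seminorm N_α[f] := sup_{z≠0} ‖f(·+z) + f(·−z) − 2f(·)‖_∞ / |z|^α < ∞. Let W̃_y f denote convolution with the Gauss kernel W̃_y(z) = (4πy)^{-n/2} e^{-|z|²/(4y)}. Then ‖∂_y W̃_y f‖_∞ ≤ C N_α[f] y^{-1+α/2} for all y > 0, with C depending only on n and α. -/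
open MeasureTheory Real

noncomputable section
namespace Stmt5Aux

abbrev E (n : ℕ) := EuclideanSpace ℝ (Fin n)
variable {n : ℕ}

lemma mul_exp_le (b s : ℝ) (hb : 0 < b) (_hs : 0 ≤ s) :
    s * rexp (-b * s) ≤ (2 / b) * rexp (-(b / 2) * s) := by
  have h1 : (b/2) * s ≤ rexp ((b/2) * s) := by
    have := Real.add_one_le_exp ((b/2)*s); linarith
  have h2 : s ≤ (2/b) * rexp ((b/2)*s) := by
    rw [div_mul_eq_mul_div, le_div_iff₀ hb]
    nlinarith
  calc s * rexp (-b*s) ≤ ((2/b) * rexp ((b/2)*s)) * rexp (-b*s) := by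
        exact mul_le_mul_of_nonneg_right h2 (Real.exp_pos _).le
    _ = (2/b) * rexp (-(b/2)*s) := by
        rw [mul_assoc, ← Real.exp_add]; ring_nf

lemma sq_mul_exp_le (b s : ℝ) (hb : 0 < b) (hs : 0 ≤ s) :
    s^2 * rexp (-b * s) ≤ (16 / b^2) * rexp (-(b / 2) * s) := by
  have h1 : (b/4) * s ≤ rexp ((b/4) * s) := by
    have := Real.add_one_le_exp ((b/4)*s); linarith
  have h2 : s ≤ (4/b) * rexp ((b/4)*s) := by
    rw [div_mul_eq_mul_div, le_div_iff₀ hb]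
    nlinarith
  have h3 : s^2 ≤ (16/b^2) * rexp ((b/2)*s) := by
    have := mul_le_mul h2 h2 hs (by positivity)
    calc s^2 = s * s := sq s
      _ ≤ ((4/b) * rexp ((b/4)*s)) * ((4/b) * rexp ((b/4)*s)) := this
      _ = (16/b^2) * rexp ((b/2)*s) := by
          rw [show (4/b) * rexp ((b/4)*s) * ((4/b) * rexp ((b/4)*s))
              = (16/b^2) * (rexp ((b/4)*s) * rexp ((b/4)*s)) by ring, ← Real.exp_add]
          ring_nf
  calc s^2 * rexp (-b*s) ≤ ((16/b^2) * rexp ((b/2)*s)) * rexp (-b*s) := by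
        exact mul_le_mul_of_nonneg_right h3 (Real.exp_pos _).le
    _ = (16/b^2) * rexp (-(b/2)*s) := by rw [mul_assoc, ← Real.exp_add]; ring_nf

lemma integrable_gauss {b : ℝ} (hb : 0 < b) :
    Integrable (fun v : E n => rexp (-b * ‖v‖ ^ 2)) := by
  have h := (GaussianFourier.integrable_cexp_neg_mul_sq_norm_add (V := E n)
      (b := (b : ℂ)) (by simpa using hb) 0 0).norm
  have : (fun v : E n => ‖Complex.exp (-(b:ℂ) * ‖v‖^2 + 0 * (inner ℝ (0 : E n) v : ℝ))‖)
      = fun v : E n => rexp (-b * ‖v‖ ^ 2) := by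
    funext v
    rw [Complex.norm_exp]
    congr 1
    have : -(b:ℂ) * (‖v‖:ℂ)^2 + 0 * ((inner ℝ (0 : E n) v : ℝ) : ℂ)
        = ((-b * ‖v‖^2 : ℝ) : ℂ) := by push_cast; ring
    rw [this, Complex.ofReal_re]
  rwa [this] at h

lemma integrable_rpow_gauss {b p : ℝ} (hb : 0 < b) (hp0 : 0 ≤ p) (hp4 : p ≤ 4) :
    Integrable (fun v : E n => ‖v‖ ^ p * rexp (-b * ‖v‖ ^ 2)) := by
  apply Integrable.mono' (g := fun v : E n => (1 + 16/b^2) * rexp (-(b/2) * ‖v‖^2))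
  · exact (integrable_gauss (half_pos hb)).const_mul _
  · exact ((((Real.continuous_rpow_const hp0).comp continuous_norm).measurable).mul
      (((measurable_norm.pow_const 2).const_mul (-b)).exp)).aestronglyMeasurable
  · refine Filter.Eventually.of_forall (fun v => ?_)
    set t := ‖v‖ with ht'
    have ht : 0 ≤ t := norm_nonneg v
    have htp : t ^ p ≤ 1 + (t^2)^2 := by
      rcases le_total t 1 with h | h
      · have := Real.rpow_le_one ht h hp0
        nlinarith [sq_nonneg (t^2)]
      · have h4 : t ^ p ≤ t ^ (4:ℝ) := Real.rpow_le_rpow_of_exponent_le h hp4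
        have h5 : t ^ (4:ℝ) = (t^2)^2 := by
          rw [show (4:ℝ) = ((4:ℕ):ℝ) by norm_num, Real.rpow_natCast]; ring
        rw [h5] at h4
        nlinarith
    have e1 : rexp (-b*t^2) ≤ rexp (-(b/2)*t^2) :=
      Real.exp_le_exp.2 (by nlinarith [sq_nonneg t])
    have e2 : (t^2)^2 * rexp (-b * t^2) ≤ 16/b^2 * rexp (-(b/2)*t^2) :=
      sq_mul_exp_le b (t^2) hb (sq_nonneg t)
    have hnn : 0 ≤ t ^ p * rexp (-b * t^2) := by positivity
    rw [Real.norm_eq_abs, abs_of_nonneg hnn]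
    calc t ^ p * rexp (-b*t^2) ≤ (1 + (t^2)^2) * rexp (-b*t^2) :=
          mul_le_mul_of_nonneg_right htp (Real.exp_pos _).le
      _ = rexp (-b*t^2) + (t^2)^2 * rexp (-b*t^2) := by ring
      _ ≤ rexp (-(b/2)*t^2) + 16/b^2 * rexp (-(b/2)*t^2) := add_le_add e1 e2
      _ = (1 + 16/b^2) * rexp (-(b/2)*t^2) := by ring

lemma integrable_sq_gauss {b : ℝ} (hb : 0 < b) :
    Integrable (fun v : E n => ‖v‖^2 * rexp (-b * ‖v‖^2)) := by
  have h := integrable_rpow_gauss (n := n) (b := b) (p := 2) hb (by norm_num) (by norm_num)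
  have : (fun v : E n => ‖v‖ ^ (2:ℝ) * rexp (-b * ‖v‖^2))
      = fun v : E n => ‖v‖^2 * rexp (-b * ‖v‖^2) := by
    funext v
    rw [show (2:ℝ) = ((2:ℕ):ℝ) by norm_num, Real.rpow_natCast]
  rwa [this] at h

def K (n : ℕ) (s : ℝ) (z : E n) : ℝ :=
  (4 * π * s) ^ (-(n:ℝ)/2) * rexp (-‖z‖ ^ 2 / (4 * s))

def D (n : ℕ) (y : ℝ) (z : E n) : ℝ :=
  K n y z * (-(n:ℝ)/(2*y) + ‖z‖^2/(4*y^2))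

lemma K_pos {s : ℝ} (hs : 0 < s) (z : E n) : 0 < K n s z := by
  unfold K
  have : 0 < 4 * π * s := by positivity
  positivity

lemma hasDerivAt_K (z : E n) {s : ℝ} (hs : 0 < s) :
    HasDerivAt (fun t => K n t z) (D n s z) s := by
  have h4πs : (0:ℝ) < 4 * π * s := by positivity
  have hu : HasDerivAt (fun t : ℝ => (4 * π * t) ^ (-(n:ℝ)/2))
      (4*π * (-(n:ℝ)/2) * (4*π*s) ^ (-(n:ℝ)/2 - 1)) s := by
    have hl : HasDerivAt (fun t : ℝ => 4 * π * t) (4*π) s := by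
      simpa using (hasDerivAt_id s).const_mul (4*π)
    have := hl.rpow_const (p := -(n:ℝ)/2) (Or.inl h4πs.ne')
    exact this
  have hv : HasDerivAt (fun t : ℝ => rexp (-‖z‖^2 / (4 * t)))
      (rexp (-‖z‖^2 / (4*s)) * (‖z‖^2 / (4*s^2))) s := by
    have hinner : HasDerivAt (fun t : ℝ => -‖z‖^2 / (4 * t)) (‖z‖^2 / (4*s^2)) s := by
      have h1 : HasDerivAt (fun t : ℝ => t⁻¹) (-(s^2)⁻¹) s := hasDerivAt_inv hs.ne'
      have h2 := h1.const_mul (-‖z‖^2/4)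
      have e1 : (fun t : ℝ => -‖z‖^2 / (4 * t)) = fun y => -‖z‖ ^ 2 / 4 * y⁻¹ := by
        funext t; ring
      have e2 : ‖z‖^2 / (4*s^2) = -‖z‖ ^ 2 / 4 * -(s ^ 2)⁻¹ := by ring
      rw [e1, e2]; exact h2
    exact hinner.exp
  have key := hu.mul hv
  have heq : D n s z = 4*π * (-(n:ℝ)/2) * (4*π*s) ^ (-(n:ℝ)/2 - 1) * rexp (-‖z‖^2/(4*s))
      + (4*π*s) ^ (-(n:ℝ)/2) * (rexp (-‖z‖^2/(4*s)) * (‖z‖^2/(4*s^2))) := by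
    unfold D K
    rw [Real.rpow_sub h4πs, Real.rpow_one]
    field_simp
  rw [heq]
  exact key

lemma measurable_K (s : ℝ) : Measurable (fun z : E n => K n s z) := by
  unfold K
  exact (((measurable_norm.pow_const 2).neg.div_const (4*s)).exp).const_mul _

lemma measurable_D (y : ℝ) : Measurable (fun z : E n => D n y z) := by
  unfold D
  exact (measurable_K y).mul
    (((measurable_norm.pow_const 2).div_const (4*y^2)).const_add _)

lemma key_deriv {y : ℝ} (hy : 0 < y) (g : E n → ℝ) (hg : Measurable g)
    {B : ℝ} (hB : ∀ z, |g z| ≤ B) :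
    Integrable (fun z : E n => D n y z * g z) ∧
    HasDerivAt (fun s => ∫ z : E n, K n s z * g z) (∫ z : E n, D n y z * g z) y := by
  have hB0 : 0 ≤ B := le_trans (abs_nonneg _) (hB 0)
  have hπ := Real.pi_pos
  set c₀ : ℝ := (4 * π * y) ^ (-(n:ℝ)/2) with hc₀
  set C : ℝ := (2 * π * y) ^ (-(n:ℝ)/2) with hC
  have hCpos : 0 < C := Real.rpow_pos_of_pos (by positivity) _
  have hball : ∀ s ∈ Metric.ball y (y/2), y/2 < s ∧ s < 3*y/2 := by
    intro s hs
    rw [Metric.mem_ball, Real.dist_eq, abs_sub_lt_iff] at hs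
    constructor <;> linarith [hs.1, hs.2]
  refine hasDerivAt_integral_of_dominated_loc_of_deriv_le (s := Metric.ball y (y/2))
    (F' := fun s z => D n s z * g z) (Metric.ball_mem_nhds y (half_pos hy))
    (Filter.Eventually.of_forall fun s =>
      ((measurable_K s).mul hg).aestronglyMeasurable)
    ?hFint
    (((measurable_D y).mul hg).aestronglyMeasurable)
    (bound := fun z => B * C * ((n:ℝ)/y + ‖z‖^2/y^2) * rexp (-(1/(6*y)) * ‖z‖^2))
    ?hbound ?hbint ?hdiff
  case hFint =>
    apply Integrable.mono' (g := fun z : E n => (c₀ * B) * rexp (-(1/(4*y)) * ‖z‖^2))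
    · exact (integrable_gauss (by positivity)).const_mul _
    · exact ((measurable_K y).mul hg).aestronglyMeasurable
    · refine Filter.Eventually.of_forall fun z => ?_
      have hKz : 0 < K n y z := K_pos hy z
      simp only [Pi.mul_apply]
      rw [Real.norm_eq_abs, abs_mul]
      calc |K n y z| * |g z| ≤ K n y z * B := by
            rw [abs_of_pos hKz]
            exact mul_le_mul_of_nonneg_left (hB z) hKz.le
        _ = (c₀ * B) * rexp (-(1/(4*y)) * ‖z‖^2) := by
            unfold K
            rw [show -‖z‖^2/(4*y) = -(1/(4*y)) * ‖z‖^2 by ring]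
            ring
  case hbound =>
    refine Filter.Eventually.of_forall fun z => fun s hs => ?_
    obtain ⟨hs1, hs2⟩ := hball s hs
    have hspos : 0 < s := lt_trans (by linarith) hs1
    have hKz : 0 < K n s z := K_pos hspos z
    rw [Real.norm_eq_abs, abs_mul]
    unfold D
    rw [abs_mul, abs_of_pos hKz]
    have h1 : K n s z ≤ C * rexp (-(1/(6*y)) * ‖z‖^2) := by
      unfold K
      apply mul_le_mul
      · apply Real.rpow_le_rpow_of_nonpos (by positivity) (by nlinarith) (by
          apply div_nonpos_of_nonpos_of_nonneg <;> simp [Nat.cast_nonneg])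
      · apply Real.exp_le_exp.2
        rw [show -(1/(6*y)) * ‖z‖^2 = -(‖z‖^2/(6*y)) by ring,
          show -‖z‖^2/(4*s) = -(‖z‖^2/(4*s)) by ring, neg_le_neg_iff]
        apply div_le_div_of_nonneg_left (by positivity) (by linarith) (by linarith)
      · positivity
      · positivity
    have h2 : |(-(n:ℝ)/(2*s) + ‖z‖^2/(4*s^2))| ≤ (n:ℝ)/y + ‖z‖^2/y^2 := by
      refine (abs_add_le _ _).trans ?_
      have e1 : |(-(n:ℝ)/(2*s))| = (n:ℝ)/(2*s) := by
        rw [abs_div, abs_neg, abs_of_nonneg (Nat.cast_nonneg n),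
          abs_of_pos (by linarith : (0:ℝ) < 2*s)]
      have e2 : |‖z‖^2/(4*s^2)| = ‖z‖^2/(4*s^2) := abs_of_nonneg (by positivity)
      rw [e1, e2]
      have ha : (n:ℝ)/(2*s) ≤ (n:ℝ)/y :=
        div_le_div_of_nonneg_left (Nat.cast_nonneg n) hy (by linarith)
      have hb2 : ‖z‖^2/(4*s^2) ≤ ‖z‖^2/y^2 := by
        apply div_le_div_of_nonneg_left (by positivity) (by positivity) (by nlinarith)
      linarith
    calc K n s z * |(-(n:ℝ)/(2*s) + ‖z‖^2/(4*s^2))| * |g z|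
        ≤ (C * rexp (-(1/(6*y)) * ‖z‖^2)) * ((n:ℝ)/y + ‖z‖^2/y^2) * B := by
          apply mul_le_mul
          · exact mul_le_mul h1 h2 (abs_nonneg _) (by positivity)
          · exact hB z
          · exact abs_nonneg _
          · positivity
      _ = B * C * ((n:ℝ)/y + ‖z‖^2/y^2) * rexp (-(1/(6*y)) * ‖z‖^2) := by ring
  case hbint =>
    have hb6 : (0:ℝ) < 1/(6*y) := by positivity
    have h1 := (integrable_gauss (n := n) hb6).const_mul (B * C * ((n:ℝ)/y))
    have h2 := (integrable_sq_gauss (n := n) hb6).const_mul (B * C / y^2)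
    have := h1.add h2
    apply this.congr
    refine Filter.Eventually.of_forall fun z => ?_
    simp only [Pi.add_apply]
    ring
  case hdiff =>
    refine Filter.Eventually.of_forall fun z s hs => ?_
    obtain ⟨hs1, _⟩ := hball s hs
    exact (hasDerivAt_K z (by linarith)).mul_const (g z)

lemma K_integral {s : ℝ} (hs : 0 < s) : ∫ z : E n, K n s z = 1 := by
  have hπ := Real.pi_pos
  have hb : (0:ℝ) < 1/(4*s) := by positivity
  unfold K
  rw [MeasureTheory.integral_const_mul]
  have : (fun z : E n => rexp (-‖z‖^2 / (4*s))) = fun z : E n => rexp (-(1/(4*s)) * ‖z‖^2) := by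
    funext z; congr 1; ring
  rw [this, GaussianFourier.integral_rexp_neg_mul_sq_norm hb, finrank_euclideanSpace_fin]
  have h1 : π / (1/(4*s)) = 4 * π * s := by field_simp
  rw [h1, ← Real.rpow_add (by positivity)]
  rw [show -(n:ℝ)/2 + (n:ℝ)/2 = 0 by ring, Real.rpow_zero]

lemma moment_scaling {y p : ℝ} (hy : 0 < y) (_hp : 0 ≤ p) :
    ∫ v : E n, ‖v‖ ^ p * rexp (-‖v‖^2 / (4*y))
      = Real.sqrt (4*y) ^ ((n:ℝ) + p) * ∫ v : E n, ‖v‖ ^ p * rexp (-‖v‖^2) := by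
  set R : ℝ := Real.sqrt (4*y) with hR
  have hRpos : 0 < R := Real.sqrt_pos.2 (by positivity)
  have hR2 : R^2 = 4*y := Real.sq_sqrt (by positivity)
  have h := MeasureTheory.Measure.integral_comp_smul_of_nonneg (volume)
    (f := fun v : E n => ‖v‖ ^ p * rexp (-‖v‖^2 / (4*y))) R (hR := hRpos.le)
  have hcomp : (fun u : E n => ‖R • u‖ ^ p * rexp (-‖R • u‖^2 / (4*y)))
      = fun u : E n => R ^ p * (‖u‖ ^ p * rexp (-‖u‖^2)) := by
    funext u
    have hnorm : ‖R • u‖ = R * ‖u‖ := by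
      rw [norm_smul, Real.norm_eq_abs, abs_of_pos hRpos]
    rw [hnorm, Real.mul_rpow hRpos.le (norm_nonneg u)]
    have harg : -(R * ‖u‖)^2 / (4*y) = -‖u‖^2 := by
      rw [mul_pow, hR2]; field_simp
    rw [harg]; ring
  rw [hcomp] at h
  rw [MeasureTheory.integral_const_mul] at h
  have hfin : Module.finrank ℝ (E n) = n := finrank_euclideanSpace_fin
  rw [hfin] at h
  have hRn : (0:ℝ) < R ^ n := pow_pos hRpos n
  rw [smul_eq_mul] at h
  have h2 : (R:ℝ)^n * ((R^n)⁻¹ * ∫ (x : E n), ‖x‖ ^ p * rexp (-‖x‖ ^ 2 / (4 * y)))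
      = ∫ (x : E n), ‖x‖ ^ p * rexp (-‖x‖ ^ 2 / (4 * y)) := by
    rw [← mul_assoc, mul_inv_cancel₀ hRn.ne', one_mul]
  rw [← h] at h2
  rw [Real.rpow_add hRpos, Real.rpow_natCast, ← h2]
  ring

lemma integrable_rpow_K {y p : ℝ} (hy : 0 < y) (hp0 : 0 ≤ p) (hp4 : p ≤ 4) :
    Integrable (fun z : E n => ‖z‖ ^ p * K n y z) := by
  have hπ := Real.pi_pos
  have h := (integrable_rpow_gauss (n := n) (b := 1/(4*y)) (by positivity) hp0 hp4).const_mul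
    ((4*π*y) ^ (-(n:ℝ)/2))
  refine h.congr (Filter.Eventually.of_forall fun z => ?_)
  simp only
  unfold K
  rw [show -(1/(4*y)) * ‖z‖^2 = -‖z‖^2/(4*y) by ring]
  ring

lemma integral_rpow_K {y p : ℝ} (hy : 0 < y) (hp : 0 ≤ p) :
    ∫ z : E n, ‖z‖ ^ p * K n y z
      = π ^ (-(n:ℝ)/2) * (4*y) ^ (p/2) * ∫ v : E n, ‖v‖ ^ p * rexp (-‖v‖^2) := by
  have hπ := Real.pi_pos
  have h1 : (fun z : E n => ‖z‖ ^ p * K n y z)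
      = fun z : E n => (4*π*y) ^ (-(n:ℝ)/2) * (‖z‖ ^ p * rexp (-‖z‖^2 / (4*y))) := by
    funext z; unfold K; ring
  rw [h1, MeasureTheory.integral_const_mul, moment_scaling hy hp]
  have hs : Real.sqrt (4*y) = (4*y) ^ ((1:ℝ)/2) := by
    rw [Real.sqrt_eq_rpow]
  rw [hs, ← Real.rpow_mul (by positivity : (0:ℝ) ≤ 4*y)]
  have hc : (4*π*y : ℝ) ^ (-(n:ℝ)/2) = π ^ (-(n:ℝ)/2) * (4*y) ^ (-(n:ℝ)/2) := by
    rw [show (4*π*y : ℝ) = π * (4*y) by ring, Real.mul_rpow hπ.le (by positivity)]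
  rw [hc]
  have hcomb : (4*y:ℝ) ^ (-(n:ℝ)/2) * (4*y) ^ ((1:ℝ)/2*((n:ℝ)+p)) = (4*y) ^ (p/2) := by
    rw [← Real.rpow_add (by positivity)]; congr 1; ring
  linear_combination (π ^ (-(n:ℝ)/2) * ∫ (v : E n), ‖v‖ ^ p * rexp (-‖v‖ ^ 2)) * hcomb

end Stmt5Aux
end

set_option maxHeartbeats 1000000
open Stmt5Aux

theorem stmt_5 (n : ℕ) (α N : ℝ) (hα0 : 0 < α) (hα2 : α < 2) (hN : 0 ≤ N)
    (f : EuclideanSpace ℝ (Fin n) → ℝ) (hf : Measurable f)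
    (hbd : ∃ B, ∀ x, |f x| ≤ B)
    (hzyg : ∀ x z, |f (x + z) + f (x - z) - 2 * f x| ≤ N * ‖z‖ ^ α) :
    ∃ C > 0, ∀ y > (0:ℝ), ∀ x : EuclideanSpace ℝ (Fin n),
      |deriv (fun s : ℝ => ∫ z : EuclideanSpace ℝ (Fin n),
          (4 * Real.pi * s) ^ (-(n:ℝ)/2) * Real.exp (-‖z‖ ^ 2 / (4 * s)) * f (x - z)) y|
        ≤ C * N * y ^ (-1 + α / 2) := by
  obtain ⟨B, hB⟩ := hbd
  have hπ := Real.pi_pos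
  set Jα := ∫ v : E n, ‖v‖ ^ α * rexp (-‖v‖^2) with hJα
  set Jα2 := ∫ v : E n, ‖v‖ ^ (α+2) * rexp (-‖v‖^2) with hJα2
  have hJαnn : 0 ≤ Jα := integral_nonneg (fun v => by positivity)
  have hJα2nn : 0 ≤ Jα2 := integral_nonneg (fun v => by positivity)
  set C₀ : ℝ := π ^ (-(n:ℝ)/2) * 4 ^ (α/2) * (((n:ℝ)/2) * Jα + Jα2) with hC₀
  have hC₀nn : 0 ≤ C₀ := by
    apply mul_nonneg (mul_nonneg (Real.rpow_nonneg hπ.le _) (Real.rpow_nonneg (by norm_num) _))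
    have : (0:ℝ) ≤ ((n:ℝ)/2) * Jα := mul_nonneg (by positivity) hJαnn
    linarith
  refine ⟨C₀/2 + 1, by linarith, fun y hy x => ?_⟩
  have hy0 : (0:ℝ) < y := hy
  obtain ⟨I1, H1⟩ := key_deriv (n := n) hy0 (fun z => f (x - z))
    (hf.comp (measurable_const.sub measurable_id)) (B := B) (fun z => hB _)
  obtain ⟨I2, H2⟩ := key_deriv (n := n) hy0 (fun z => f (x + z))
    (hf.comp (measurable_const.add measurable_id)) (B := B) (fun z => hB _)
  obtain ⟨I3, H3⟩ := key_deriv (n := n) hy0 (fun _ => (1:ℝ)) measurable_const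
    (B := 1) (fun z => by norm_num)
  have hfun : (fun s : ℝ => ∫ z : EuclideanSpace ℝ (Fin n),
      (4 * Real.pi * s) ^ (-(n:ℝ)/2) * Real.exp (-‖z‖ ^ 2 / (4 * s)) * f (x - z))
      = fun s => ∫ z : E n, K n s z * f (x - z) := rfl
  rw [hfun, H1.deriv]
  set d := ∫ z : E n, D n y z * f (x - z) with hdd
  -- cancellation : ∫ D = 0
  have hconst : (fun s : ℝ => ∫ z : E n, K n s z * (1:ℝ)) =ᶠ[nhds y] fun _ => (1:ℝ) := by
    filter_upwards [Ioi_mem_nhds hy0] with s hs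
    simp only [mul_one]
    exact K_integral hs
  have h0 : (∫ z : E n, D n y z * 1) = 0 := by
    have hc : HasDerivAt (fun _ : ℝ => (1:ℝ)) (∫ z : E n, D n y z * 1) y :=
      H3.congr_of_eventuallyEq hconst.symm
    exact hc.unique (hasDerivAt_const y 1)
  have hD0 : (∫ z : E n, D n y z) = 0 := by
    simp only [mul_one] at h0; exact h0
  have I3' : Integrable (fun z : E n => D n y z) := by simpa using I3
  -- symmetry
  have hDneg : ∀ z : E n, D n y (-z) = D n y z := by
    intro z; unfold D K; simp only [norm_neg]
  have hsym : (∫ z : E n, D n y z * f (x + z)) = ∫ z : E n, D n y z * f (x - z) := by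
    have hneg := MeasureTheory.integral_neg_eq_self
      (fun z : E n => D n y z * f (x - z)) volume
    rw [← hneg]
    congr 1
    funext z
    rw [hDneg z, sub_neg_eq_add]
  -- the 2d identity
  have h2d : 2 * d = ∫ z : E n, D n y z * (f (x + z) + f (x - z) - 2 * f x) := by
    have hsplit : (fun z : E n => D n y z * (f (x + z) + f (x - z) - 2 * f x))
        = fun z : E n => (D n y z * f (x + z) + D n y z * f (x - z)) - (2 * f x) * D n y z := by
      funext z; ring
    have IA : Integrable (fun z : E n => D n y z * f (x + z) + D n y z * f (x - z)) :=
      I2.add I1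
    have IB : Integrable (fun z : E n => 2 * f x * D n y z) := I3'.const_mul _
    rw [hsplit, MeasureTheory.integral_sub IA IB,
      MeasureTheory.integral_add I2 I1, MeasureTheory.integral_const_mul, hsym, hD0]
    ring
  -- pointwise majorant
  have hrp : ∀ z : E n, ‖z‖ ^ (α+2) = ‖z‖ ^ α * ‖z‖^2 := by
    intro z
    rw [Real.rpow_add' (norm_nonneg z) (by intro h; nlinarith),
      show (2:ℝ) = ((2:ℕ):ℝ) by norm_num, Real.rpow_natCast]
  have hmaj : ∀ z : E n, |D n y z * (f (x + z) + f (x - z) - 2 * f x)|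
      ≤ N * ((n:ℝ)/(2*y)) * (‖z‖ ^ α * K n y z)
        + N * (1/(4*y^2)) * (‖z‖ ^ (α+2) * K n y z) := by
    intro z
    have hKz := K_pos hy0 z
    have hcoef : |(-(n:ℝ)/(2*y) + ‖z‖^2/(4*y^2))| ≤ (n:ℝ)/(2*y) + ‖z‖^2/(4*y^2) := by
      refine (abs_add_le _ _).trans ?_
      rw [abs_div, abs_neg, abs_of_nonneg (Nat.cast_nonneg n),
        abs_of_pos (by positivity : (0:ℝ) < 2*y),
        abs_of_nonneg (by positivity : (0:ℝ) ≤ ‖z‖^2/(4*y^2))]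
    have hF := hzyg x z
    rw [abs_mul]
    unfold D
    rw [abs_mul, abs_of_pos hKz]
    calc K n y z * |(-(n:ℝ)/(2*y) + ‖z‖^2/(4*y^2))| * |f (x + z) + f (x - z) - 2 * f x|
        ≤ K n y z * ((n:ℝ)/(2*y) + ‖z‖^2/(4*y^2)) * (N * ‖z‖ ^ α) := by
          apply mul_le_mul (mul_le_mul_of_nonneg_left hcoef hKz.le) hF (abs_nonneg _)
          positivity
      _ = N * ((n:ℝ)/(2*y)) * (‖z‖ ^ α * K n y z)
          + N * (1/(4*y^2)) * (‖z‖ ^ (α+2) * K n y z) := by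
          rw [hrp z]; ring
  have hint1 : Integrable (fun z : E n => ‖z‖ ^ α * K n y z) :=
    integrable_rpow_K hy0 hα0.le (by linarith)
  have hint2 : Integrable (fun z : E n => ‖z‖ ^ (α+2) * K n y z) :=
    integrable_rpow_K hy0 (by linarith) (by linarith)
  have hmajint : Integrable (fun z : E n => N * ((n:ℝ)/(2*y)) * (‖z‖ ^ α * K n y z)
      + N * (1/(4*y^2)) * (‖z‖ ^ (α+2) * K n y z)) :=
    (hint1.const_mul _).add (hint2.const_mul _)
  have habs : |2 * d| ≤ ∫ z : E n, (N * ((n:ℝ)/(2*y)) * (‖z‖ ^ α * K n y z)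
      + N * (1/(4*y^2)) * (‖z‖ ^ (α+2) * K n y z)) := by
    rw [h2d]
    refine le_trans ?_ (MeasureTheory.integral_mono_of_nonneg
      (Filter.Eventually.of_forall fun z => abs_nonneg _) hmajint
      (Filter.Eventually.of_forall hmaj))
    have := MeasureTheory.norm_integral_le_integral_norm
      (fun z : E n => D n y z * (f (x + z) + f (x - z) - 2 * f x)) (μ := volume)
    simpa only [Real.norm_eq_abs] using this
  have hval : (∫ z : E n, (N * ((n:ℝ)/(2*y)) * (‖z‖ ^ α * K n y z)
      + N * (1/(4*y^2)) * (‖z‖ ^ (α+2) * K n y z)))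
      = N * ((n:ℝ)/(2*y)) * (π^(-(n:ℝ)/2) * (4*y)^(α/2) * Jα)
        + N * (1/(4*y^2)) * (π^(-(n:ℝ)/2) * (4*y)^((α+2)/2) * Jα2) := by
    rw [MeasureTheory.integral_add (hint1.const_mul _) (hint2.const_mul _),
      MeasureTheory.integral_const_mul, MeasureTheory.integral_const_mul,
      integral_rpow_K hy0 hα0.le, integral_rpow_K hy0 (by linarith)]
  rw [hval] at habs
  -- final algebra
  have h4y1 : (4*y:ℝ)^(α/2) = 4^(α/2) * y^(α/2) := Real.mul_rpow (by norm_num) hy0.le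
  have h4y2 : (4*y:ℝ)^((α+2)/2) = 4^(α/2) * y^(α/2) * (4*y) := by
    rw [show (α+2)/2 = α/2 + 1 by ring, Real.rpow_add (by positivity), Real.rpow_one, h4y1]
  have hyP : y * y^(-1+α/2) = y^(α/2) := by
    have h := (Real.rpow_add hy0 1 (-1+α/2)).symm
    rw [Real.rpow_one] at h
    rw [show (1:ℝ)+(-1+α/2) = α/2 by ring] at h
    exact h
  have hcompute : N * ((n:ℝ)/(2*y)) * (π^(-(n:ℝ)/2) * (4*y)^(α/2) * Jα)
      + N * (1/(4*y^2)) * (π^(-(n:ℝ)/2) * (4*y)^((α+2)/2) * Jα2)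
      = C₀ * N * y^(-1+α/2) := by
    rw [h4y1, h4y2, hC₀, ← hyP]
    field_simp
  rw [hcompute] at habs
  have hP : (0:ℝ) ≤ y^(-1+α/2) := Real.rpow_nonneg hy0.le _
  have habs2 : 2 * |d| ≤ C₀ * N * y^(-1+α/2) := by
    have : |2 * d| = 2 * |d| := by rw [abs_mul, abs_two]
    linarith [this ▸ habs]
  nlinarith [mul_nonneg hN hP, habs2]
end

section
/- Let 0 < β < α, m = ⌊(α−β)/2⌋ + 1, ℓ = ⌊β/2⌋ + 1 (so m + ℓ > α/2). Then there is a constant C such that for all y > 0, ∫_0^y ( ∫_{[0,t]^ℓ} (y + s₁ + ⋯ + s_ℓ)^{-(m+ℓ)+α/2} ds₁⋯ds_ℓ ) t^{-1-β/2} dt ≤ C y^{-m + (α-β)/2}. -/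
open MeasureTheory Real Set

theorem stmt_9 (α β : ℝ) (hβ0 : 0 < β) (hβα : β < α) (m ℓ : ℕ)
    (hm : m = ⌊(α - β) / 2⌋₊ + 1) (hℓ : ℓ = ⌊β / 2⌋₊ + 1) :
    ∃ C > 0, ∀ y > (0:ℝ),
      (∫ t in Set.Ioc (0:ℝ) y,
          (∫ s : Fin ℓ → ℝ in Set.univ.pi fun _ => Set.Icc (0:ℝ) t,
            (y + ∑ i, s i) ^ (-((m:ℝ) + (ℓ:ℝ)) + α / 2)) * t ^ (-1 - β / 2)) ≤
        C * y ^ (-(m:ℝ) + (α - β) / 2) := by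
  have hℓβ : β / 2 < (ℓ : ℝ) := by
    rw [hℓ]; push_cast; exact Nat.lt_floor_add_one _
  have hmαβ : (α - β) / 2 < (m : ℝ) := by
    rw [hm]; push_cast; exact Nat.lt_floor_add_one _
  set e : ℝ := -((m:ℝ) + (ℓ:ℝ)) + α / 2 with he
  set p : ℝ := (ℓ:ℝ) - 1 - β / 2 with hp
  have hp1 : 0 < p + 1 := by rw [hp]; linarith
  have henonpos : e ≤ 0 := by rw [he]; linarith
  refine ⟨(p + 1)⁻¹, by positivity, fun y hy => ?_⟩
  -- pointwise bound
  have key : ∀ t ∈ Ioc (0:ℝ) y,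
      (∫ s : Fin ℓ → ℝ in Set.univ.pi fun _ => Set.Icc (0:ℝ) t,
          (y + ∑ i, s i) ^ e) * t ^ (-1 - β / 2) ≤ y ^ e * t ^ p := by
    intro t ht
    obtain ⟨ht0, hty⟩ := ht
    have hvol : (volume (Set.univ.pi fun _ : Fin ℓ => Set.Icc (0:ℝ) t)).toReal
        = t ^ ℓ := by
      rw [volume_pi_pi]
      simp [Real.volume_Icc, ht0.le, ENNReal.toReal_pow, ENNReal.toReal_ofReal ht0.le]
    have hbound : (∫ s : Fin ℓ → ℝ in Set.univ.pi fun _ => Set.Icc (0:ℝ) t,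
        (y + ∑ i, s i) ^ e) ≤ y ^ e * t ^ ℓ := by
      rw [← hvol]
      refine le_trans (le_abs_self _) ?_
      rw [← Real.norm_eq_abs]
      refine norm_setIntegral_le_of_norm_le_const
        (by
          rw [volume_pi_pi]
          simp only [Real.volume_Icc, sub_zero, Finset.prod_const, Finset.card_univ,
            Fintype.card_fin]
          exact ENNReal.pow_lt_top ENNReal.ofReal_lt_top)
        ?_
      intro s hs
      have hs0 : 0 ≤ ∑ i, s i :=
        Finset.sum_nonneg fun i _ => (hs i (Set.mem_univ i)).1
      rw [Real.norm_eq_abs, abs_of_nonneg (Real.rpow_nonneg (by linarith) _)]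
      exact Real.rpow_le_rpow_of_nonpos hy (by linarith) henonpos
    have htp : (0:ℝ) < t ^ (-1 - β / 2) := Real.rpow_pos_of_pos ht0 _
    calc (∫ s : Fin ℓ → ℝ in Set.univ.pi fun _ => Set.Icc (0:ℝ) t,
            (y + ∑ i, s i) ^ e) * t ^ (-1 - β / 2)
        ≤ (y ^ e * t ^ ℓ) * t ^ (-1 - β / 2) := by
          exact mul_le_mul_of_nonneg_right hbound htp.le
      _ = y ^ e * t ^ p := by
          rw [mul_assoc, ← Real.rpow_natCast t ℓ, ← Real.rpow_add ht0, hp]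
          ring_nf
  -- integrability of the majorant
  have hig : IntegrableOn (fun t : ℝ => y ^ e * t ^ p) (Ioc 0 y) volume := by
    apply Integrable.const_mul
    have := (intervalIntegral.intervalIntegrable_rpow' (a := 0) (b := y)
      (r := p) (by linarith)).1
    exact this
  have hmono : (∫ t in Set.Ioc (0:ℝ) y,
      (∫ s : Fin ℓ → ℝ in Set.univ.pi fun _ => Set.Icc (0:ℝ) t,
          (y + ∑ i, s i) ^ e) * t ^ (-1 - β / 2))
      ≤ ∫ t in Set.Ioc (0:ℝ) y, y ^ e * t ^ p := by
    refine integral_mono_of_nonneg ?_ hig ?_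
    · filter_upwards [ae_restrict_mem measurableSet_Ioc] with t ht
      have ht0 := ht.1
      have h1 : (0:ℝ) ≤ ∫ s : Fin ℓ → ℝ in Set.univ.pi fun _ => Set.Icc (0:ℝ) t,
          (y + ∑ i, s i) ^ e := by
        apply setIntegral_nonneg (MeasurableSet.univ_pi fun _ => measurableSet_Icc)
        intro s hs
        have hs0 : 0 ≤ ∑ i, s i :=
          Finset.sum_nonneg fun i _ => (hs i (Set.mem_univ i)).1
        exact Real.rpow_nonneg (by linarith) _
      exact mul_nonneg h1 (Real.rpow_pos_of_pos ht0 _).le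
    · filter_upwards [ae_restrict_mem measurableSet_Ioc] with t ht
      exact key t ht
  refine hmono.trans ?_
  have hcalc : (∫ t in Set.Ioc (0:ℝ) y, y ^ e * t ^ p)
      = y ^ e * (y ^ (p + 1) / (p + 1)) := by
    rw [integral_const_mul, ← intervalIntegral.integral_of_le hy.le,
      integral_rpow (Or.inl (by linarith)),
      Real.zero_rpow (by linarith : p + 1 ≠ 0), sub_zero]
  rw [hcalc]
  have : y ^ e * (y ^ (p + 1) / (p + 1)) = (p + 1)⁻¹ * (y ^ e * y ^ (p + 1)) := by
    ring
  rw [this, ← Real.rpow_add hy]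
  have hexp : e + (p + 1) = -(m:ℝ) + (α - β) / 2 := by
    rw [he, hp]; ring
  rw [hexp]
end
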